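/- For every odd integer n ≥ 1, the local antimagic chromatic number of the fan blade graph FB(n) equals 3, i.e., χ_la(FB(n)) = 3. -/

import Mathlib

namespace LocalAntimagic

variable {V W : Type*}

/-- Induced vertex label: sum of edge labels over edges incident to `v`. -/
noncomputable def fplus (G : SimpleGraph V) (f : Sym2 V → ℕ) (v : V) : ℕ :=
  ∑ᶠ e ∈ G.incidenceSet v, f e

/-- `f` is a local antimagic labeling of `G`: a bijection from the edge set onto
`{1, …, q}` (`q` the number of edges) whose induced vertex labels distinguish
adjacent vertices. -/
def IsLocalAntimagic (G : SimpleGraph V) (f : Sym2 V → ℕ) : Prop :=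
  Set.BijOn f G.edgeSet (Set.Icc 1 G.edgeSet.ncard) ∧
  ∀ ⦃u w : V⦄, G.Adj u w → fplus G f u ≠ fplus G f w

/-- The local antimagic chromatic number: the least number of distinct induced
vertex labels over all local antimagic labelings. -/
noncomputable def chiLA (G : SimpleGraph V) : ℕ :=
  sInf {c : ℕ | ∃ f : Sym2 V → ℕ, IsLocalAntimagic G f ∧ (Set.range (fplus G f)).ncard = c}

/-- `n` disjoint copies of the path `P₃`; in copy `i`, vertex `(i,0) = uᵢ`,
`(i,1) = wᵢ`, `(i,2) = vᵢ`. -/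
def nP3 (n : ℕ) : SimpleGraph (Fin n × Fin 3) :=
  SimpleGraph.fromRel (fun x y => x.1 = y.1 ∧ ((x.2 = 0 ∧ y.2 = 1) ∨ (x.2 = 1 ∧ y.2 = 2)))

/-- Join of two graphs on disjoint vertex sets. -/
def joinG {α β : Type*} (G : SimpleGraph α) (H : SimpleGraph β) : SimpleGraph (α ⊕ β) :=
  SimpleGraph.fromRel (fun x y =>
    match x, y with
    | Sum.inl a, Sum.inl b => G.Adj a b
    | Sum.inr a, Sum.inr b => H.Adj a b
    | Sum.inl _, Sum.inr _ => True
    | Sum.inr _, Sum.inl _ => False)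

/-- Disjoint union of two graphs. -/
def disjUnionG {α β : Type*} (G : SimpleGraph α) (H : SimpleGraph β) : SimpleGraph (α ⊕ β) :=
  SimpleGraph.fromRel (fun x y =>
    match x, y with
    | Sum.inl a, Sum.inl b => G.Adj a b
    | Sum.inr a, Sum.inr b => H.Adj a b
    | _, _ => False)

/-- `m` disjoint copies of `G`. -/
def copies (m : ℕ) (G : SimpleGraph V) : SimpleGraph (Fin m × V) :=
  SimpleGraph.fromRel (fun x y => x.1 = y.1 ∧ G.Adj x.2 y.2)

/-- The fan blade graph `FB(n) = nP₃ ∨ O₁`. -/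
def FB (n : ℕ) : SimpleGraph ((Fin n × Fin 3) ⊕ Fin 1) :=
  joinG (nP3 n) ⊥

/-- The graph obtained from `G` by merging vertices according to `p` (fibers of
`p` are merged into single vertices). -/
def mergeMap (G : SimpleGraph V) (p : V → W) : SimpleGraph W :=
  SimpleGraph.fromRel (fun a b => ∃ x y, G.Adj x y ∧ p x = a ∧ p y = b)

/-- No two distinct vertices of `S` are adjacent or share a common neighbor. -/
def NoCommon (G : SimpleGraph V) (S : Set V) : Prop :=
  ∀ x ∈ S, ∀ y ∈ S, x ≠ y → ¬ G.Adj x y ∧ ∀ z, ¬ (G.Adj x z ∧ G.Adj y z)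

/-- `P` is a partition of the set `S` into nonempty blocks. -/
def IsPartitionOn (S : Set V) (P : Set (Set V)) : Prop :=
  (∀ B ∈ P, B ⊆ S) ∧ (∀ v ∈ S, ∃! B, B ∈ P ∧ v ∈ B) ∧ ∀ B ∈ P, B.Nonempty

/-- `p` identifies exactly the vertices lying in a common block of `P`,
and nothing else; `p` is surjective so the codomain is exactly the merged
vertex set. -/
def IsMergeOf (P : Set (Set V)) (p : V → W) : Prop :=
  Function.Surjective p ∧ ∀ x y : V, p x = p y ↔ (x = y ∨ ∃ B ∈ P, x ∈ B ∧ y ∈ B)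


/-- The diamond fan `DF(2s)`: two copies (`c = 0,1`) of `sP₃`, plus two hub
vertices `y = Sum.inr 0` and `z = Sum.inr 1`; in copy `c`, blade `j`, position
`0,2` are the degree-1 endpoints and `1` the middle vertex of the path. -/
def DF2 (s : ℕ) : SimpleGraph ((Fin 2 × Fin s × Fin 3) ⊕ Fin 2) :=
  SimpleGraph.fromRel (fun x y =>
    match x, y with
    | Sum.inl a, Sum.inl b =>
        a.1 = b.1 ∧ a.2.1 = b.2.1 ∧ ((a.2.2 = 0 ∧ b.2.2 = 1) ∨ (a.2.2 = 1 ∧ b.2.2 = 2))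
    | Sum.inl a, Sum.inr j =>
        (j = 0 ∧ ((a.1 = 0 ∧ a.2.2 ≠ 1) ∨ (a.1 = 1 ∧ a.2.2 = 1))) ∨
        (j = 1 ∧ ((a.1 = 1 ∧ a.2.2 ≠ 1) ∨ (a.1 = 0 ∧ a.2.2 = 1)))
    | _, _ => False)

abbrev DFVert (r s : ℕ) :=
  (Fin r × ((Fin 2 × Fin s × Fin 3) ⊕ Fin 2)) ⊕ ((Fin s × Fin 3) ⊕ Fin 1)

/-- Peanut graph `Pt(n)`: `Sum.inl (i, 0) = u_{i+1}`, `Sum.inl (i, 1) = v_{i+1}`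
for `0 ≤ i ≤ 2n`, and `Sum.inr 0 = x`, `Sum.inr 1 = y`. -/
abbrev PtVert (n : ℕ) := (Fin (2*n+1) × Fin 2) ⊕ Fin 2

def Pt (n : ℕ) : SimpleGraph (PtVert n) :=
  SimpleGraph.fromRel (fun a b =>
    match a, b with
    | Sum.inl p, Sum.inl q =>
        (p.2 = q.2 ∧ (p.1 : ℕ) + 1 = (q.1 : ℕ)) ∨
        (p.1 = q.1 ∧ (p.1 : ℕ) % 2 = 0 ∧ p.2 = 0 ∧ q.2 = 1)
    | Sum.inr j, Sum.inl p => (j = 0 ∧ (p.1 : ℕ) = 0) ∨ (j = 1 ∧ (p.1 : ℕ) = 2*n)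
    | _, _ => False)

/-- Triangular bracelet `TB(n)`: `Sum.inl (j, 0) = u_{2j+1}`,
`Sum.inl (j, 1) = v_{2j+1}` for `0 ≤ j ≤ n`, and `Sum.inr j = z_{2j}`. -/
abbrev TBVert (n : ℕ) := (Fin (n+1) × Fin 2) ⊕ Fin (n+1)

def TB (n : ℕ) : SimpleGraph (TBVert n) :=
  SimpleGraph.fromRel (fun a b =>
    match a, b with
    | Sum.inl p, Sum.inl q => p.1 = q.1 ∧ p.2 = 0 ∧ q.2 = 1
    | Sum.inr j, Sum.inl p =>
        (p.1 : ℕ) = (j : ℕ) ∨ (p.1 : ℕ) + 1 = (j : ℕ) ∨ ((j : ℕ) = 0 ∧ (p.1 : ℕ) = n)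
    | _, _ => False)

/-- Disjoint union of an indexed family of graphs. -/
def sigmaG {ι : Type*} {Vf : ι → Type*} (G : ∀ a, SimpleGraph (Vf a)) :
    SimpleGraph (Σ a, Vf a) :=
  SimpleGraph.fromRel (fun x y =>
    ∃ h : x.1 = y.1, (G y.1).Adj (cast (congrArg Vf h) x.2) y.2)

/-- `FB¹(r,s)`: `Sum.inl (i,j) = w_{i,j}`, `Sum.inr (Sum.inl i) = xᵢ`,
`Sum.inr (Sum.inr (j,0)) = uⱼ`, `Sum.inr (Sum.inr (j,1)) = vⱼ`. -/
def FB1 (r s : ℕ) : SimpleGraph ((Fin r × Fin s) ⊕ (Fin r ⊕ (Fin s × Fin 2))) :=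
  SimpleGraph.fromRel (fun a b =>
    match a, b with
    | Sum.inl w, Sum.inr (Sum.inl x) => w.1 = x
    | Sum.inl w, Sum.inr (Sum.inr uv) => w.2 = uv.1
    | Sum.inr (Sum.inl _), Sum.inr (Sum.inr _) => True
    | _, _ => False)

/-- `FB²(r,s)`: `Sum.inl (i,j,0) = u_{i,j}`, `Sum.inl (i,j,1) = v_{i,j}`,
`Sum.inr (Sum.inl i) = xᵢ`, `Sum.inr (Sum.inr j) = wⱼ`. -/
def FB2 (r s : ℕ) : SimpleGraph ((Fin r × Fin s × Fin 2) ⊕ (Fin r ⊕ Fin s)) :=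
  SimpleGraph.fromRel (fun a b =>
    match a, b with
    | Sum.inl uv, Sum.inr (Sum.inl x) => uv.1 = x
    | Sum.inl uv, Sum.inr (Sum.inr w) => uv.2.1 = w
    | Sum.inr (Sum.inl _), Sum.inr (Sum.inr _) => True
    | _, _ => False)


/-- For every odd `n ≥ 1`, `χ_{la}(FB(n)) = 3`. -/


abbrev Vt (n : ℕ) := (Fin n × Fin 3) ⊕ Fin 1

def hub {n : ℕ} : Vt n := Sum.inr 0

def ul {n : ℕ} (i : Fin n) (j : Fin 3) : Vt n := Sum.inl (i, j)

lemma FB_adj {n : ℕ} (a b : Vt n) : (FB n).Adj a b ↔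
    ((∃ i : Fin n, (a = ul i 0 ∧ b = ul i 1) ∨ (a = ul i 1 ∧ b = ul i 0) ∨
      (a = ul i 1 ∧ b = ul i 2) ∨ (a = ul i 2 ∧ b = ul i 1)) ∨
     (∃ p : Fin n × Fin 3, a = Sum.inl p ∧ b = hub) ∨
     (∃ p : Fin n × Fin 3, a = hub ∧ b = Sum.inl p)) := by
  constructor
  · rintro hadj
    rw [FB, joinG, SimpleGraph.fromRel_adj] at hadj
    obtain ⟨hne, h⟩ := hadj
    match a, b with
    | Sum.inl p, Sum.inl q =>
      have h' : (nP3 n).Adj p q ∨ (nP3 n).Adj q p := h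
      left
      rcases h' with h' | h' <;>
      · rw [nP3, SimpleGraph.fromRel_adj] at h'
        obtain ⟨-, h'⟩ := h'
        obtain ⟨i, j⟩ := p; obtain ⟨i', j'⟩ := q
        rcases h' with ⟨⟨h1, h2⟩ | h2⟩ | ⟨h1, h2⟩ <;>
          simp_all [ul, Prod.ext_iff] <;> aesop
    | Sum.inl p, Sum.inr x =>
      right; left; exact ⟨p, rfl, by simp [hub, Subsingleton.elim x 0]⟩
    | Sum.inr x, Sum.inl p =>
      right; right; exact ⟨p, by simp [hub, Subsingleton.elim x 0], rfl⟩
    | Sum.inr x, Sum.inr y => simp_all [Subsingleton.elim x y]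
  · rintro (⟨i, h⟩ | ⟨p, rfl, rfl⟩ | ⟨p, rfl, rfl⟩)
    · rw [FB, joinG, SimpleGraph.fromRel_adj]
      rcases h with ⟨rfl, rfl⟩ | ⟨rfl, rfl⟩ | ⟨rfl, rfl⟩ | ⟨rfl, rfl⟩ <;>
        refine ⟨by simp [ul], ?_⟩ <;>
        [left; right; left; right] <;>
        · show (nP3 n).Adj _ _
          rw [nP3, SimpleGraph.fromRel_adj]
          exact ⟨by simp, Or.inl ⟨rfl, by simp⟩⟩
    · exact SimpleGraph.fromRel_adj _ _ _ |>.2 ⟨by simp [hub], Or.inl trivial⟩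
    · exact SimpleGraph.fromRel_adj _ _ _ |>.2 ⟨by simp [hub], Or.inr trivial⟩



-- arithmetic lemmas about rho and sigma
def rho (m i : ℕ) : ℕ := (i + m) % (2*m+1)

lemma rho_lt (m i : ℕ) : rho m i < 2*m+1 := Nat.mod_lt _ (by omega)

lemma rho_eq (m i : ℕ) (hi : i < 2*m+1) :
    rho m i = if i ≤ m then i + m else i - m - 1 := by
  unfold rho
  split
  · exact Nat.mod_eq_of_lt (by omega)
  · rw [Nat.mod_eq_sub_mod (by omega)]
    have : i + m - (2*m+1) = i - m - 1 := by omega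
    rw [this]; exact Nat.mod_eq_of_lt (by omega)

lemma rho_injOn (m : ℕ) {i j : ℕ} (hi : i < 2*m+1) (hj : j < 2*m+1)
    (h : rho m i = rho m j) : i = j := by
  rw [rho_eq m i hi, rho_eq m j hj] at h
  split at h <;> split at h <;> omega

lemma rho_surj (m k : ℕ) (hk : k < 2*m+1) : ∃ i < 2*m+1, rho m i = k := by
  by_cases h : m ≤ k
  · exact ⟨k - m, by omega, by rw [rho_eq m _ (by omega)]; split <;> omega⟩
  · exact ⟨k + m + 1, by omega, by rw [rho_eq m _ (by omega)]; split <;> omega⟩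

-- sigma i = i + rho m i; bijection from [0, 2m+1) onto [m, 3m]
lemma sigma_mem (m i : ℕ) (hi : i < 2*m+1) : m ≤ i + rho m i ∧ i + rho m i ≤ 3*m := by
  rw [rho_eq m i hi]; split <;> omega

lemma sigma_injOn (m : ℕ) {i j : ℕ} (hi : i < 2*m+1) (hj : j < 2*m+1)
    (h : i + rho m i = j + rho m j) : i = j := by
  rw [rho_eq m i hi, rho_eq m j hj] at h
  split at h <;> split at h <;> omega

lemma sigma_surj (m s : ℕ) (hs : m ≤ s) (hs' : s ≤ 3*m) : ∃ i < 2*m+1, i + rho m i = s := by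
  by_cases h : (s - m) % 2 = 0
  · refine ⟨(s - m)/2, by omega, ?_⟩
    rw [rho_eq m _ (by omega)]
    split <;> omega
  · refine ⟨(s + m + 1)/2, by omega, ?_⟩
    rw [rho_eq m _ (by omega)]
    split <;> omega


def lab (m : ℕ) : Vt (2*m+1) → Vt (2*m+1) → ℕ
  | Sum.inl (i, j), Sum.inl (i', j') =>
      if i = i' ∧ j = 0 ∧ j' = 1 then (i : ℕ) + 1
      else if i = i' ∧ j = 1 ∧ j' = 2 then 3*(2*m+1) + rho m i + 1
      else 0
  | Sum.inl (i, j), Sum.inr _ =>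
      if j = 0 then 5*(2*m+1) - i
      else if j = 1 then 7*m + 3 - ((i : ℕ) + rho m i)
      else 2*(2*m+1) - rho m i
  | _, _ => 0

def flab (m : ℕ) : Sym2 (Vt (2*m+1)) → ℕ :=
  Sym2.lift ⟨fun a b => lab m a b + lab m b a, fun a b => add_comm _ _⟩

variable {m : ℕ}

lemma flab_uw (i : Fin (2*m+1)) : flab m s(ul i 0, ul i 1) = (i : ℕ) + 1 := by
  simp [flab, lab, ul]

lemma flab_wv (i : Fin (2*m+1)) : flab m s(ul i 1, ul i 2) = 3*(2*m+1) + rho m i + 1 := by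
  simp [flab, lab, ul]

lemma flab_xu (i : Fin (2*m+1)) : flab m s(ul i 0, hub) = 5*(2*m+1) - (i : ℕ) := by
  simp [flab, lab, ul, hub]

lemma flab_xw (i : Fin (2*m+1)) : flab m s(ul i 1, hub) = 7*m + 3 - ((i : ℕ) + rho m i) := by
  simp [flab, lab, ul, hub]

lemma flab_xv (i : Fin (2*m+1)) : flab m s(ul i 2, hub) = 2*(2*m+1) - rho m i := by
  simp [flab, lab, ul, hub]


lemma inc_u (i : Fin (2*m+1)) :
    (FB (2*m+1)).incidenceSet (ul i 0) = {s(ul i 0, ul i 1), s(ul i 0, hub)} := by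
  ext e
  induction e using Sym2.ind with
  | _ a b =>
    simp only [SimpleGraph.incidenceSet, Set.mem_setOf_eq, Set.mem_insert_iff,
      Set.mem_singleton_iff, SimpleGraph.mem_edgeSet, Sym2.mem_iff, Sym2.eq_iff]
    constructor
    · rintro ⟨hadj, hmem⟩
      rw [FB_adj] at hadj
      rcases hadj with ⟨i', h⟩ | ⟨p, h1, h2⟩ | ⟨p, h1, h2⟩ <;>
        simp_all [ul, hub, Prod.ext_iff] <;> aesop
    · rintro ((⟨rfl, rfl⟩ | ⟨rfl, rfl⟩) | (⟨rfl, rfl⟩ | ⟨rfl, rfl⟩)) <;>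
        refine ⟨(FB_adj _ _).2 ?_, by simp [ul, hub]⟩
      · exact Or.inl ⟨i, Or.inl ⟨rfl, rfl⟩⟩
      · exact Or.inl ⟨i, Or.inr (Or.inl ⟨rfl, rfl⟩)⟩
      · exact Or.inr (Or.inl ⟨(i, 0), rfl, rfl⟩)
      · exact Or.inr (Or.inr ⟨(i, 0), rfl, rfl⟩)


lemma inc_v (i : Fin (2*m+1)) :
    (FB (2*m+1)).incidenceSet (ul i 2) = {s(ul i 1, ul i 2), s(ul i 2, hub)} := by
  ext e
  induction e using Sym2.ind with
  | _ a b =>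
    simp only [SimpleGraph.incidenceSet, Set.mem_setOf_eq, Set.mem_insert_iff,
      Set.mem_singleton_iff, SimpleGraph.mem_edgeSet, Sym2.mem_iff, Sym2.eq_iff]
    constructor
    · rintro ⟨hadj, hmem⟩
      rw [FB_adj] at hadj
      rcases hadj with ⟨i', h⟩ | ⟨p, h1, h2⟩ | ⟨p, h1, h2⟩ <;>
        simp_all [ul, hub, Prod.ext_iff] <;> aesop
    · rintro ((⟨rfl, rfl⟩ | ⟨rfl, rfl⟩) | (⟨rfl, rfl⟩ | ⟨rfl, rfl⟩)) <;>
        refine ⟨(FB_adj _ _).2 ?_, by simp [ul, hub]⟩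
      · exact Or.inl ⟨i, Or.inr (Or.inr (Or.inl ⟨rfl, rfl⟩))⟩
      · exact Or.inl ⟨i, Or.inr (Or.inr (Or.inr ⟨rfl, rfl⟩))⟩
      · exact Or.inr (Or.inl ⟨(i, 2), rfl, rfl⟩)
      · exact Or.inr (Or.inr ⟨(i, 2), rfl, rfl⟩)

lemma inc_w (i : Fin (2*m+1)) :
    (FB (2*m+1)).incidenceSet (ul i 1) =
      {s(ul i 0, ul i 1), s(ul i 1, ul i 2), s(ul i 1, hub)} := by
  ext e
  induction e using Sym2.ind with
  | _ a b =>
    simp only [SimpleGraph.incidenceSet, Set.mem_setOf_eq, Set.mem_insert_iff,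
      Set.mem_singleton_iff, SimpleGraph.mem_edgeSet, Sym2.mem_iff, Sym2.eq_iff]
    constructor
    · rintro ⟨hadj, hmem⟩
      rw [FB_adj] at hadj
      rcases hadj with ⟨i', h⟩ | ⟨p, h1, h2⟩ | ⟨p, h1, h2⟩ <;>
        simp_all [ul, hub, Prod.ext_iff] <;> aesop
    · rintro ((⟨rfl, rfl⟩ | ⟨rfl, rfl⟩) | (⟨rfl, rfl⟩ | ⟨rfl, rfl⟩) | (⟨rfl, rfl⟩ | ⟨rfl, rfl⟩)) <;>
        refine ⟨(FB_adj _ _).2 ?_, by simp [ul, hub]⟩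
      · exact Or.inl ⟨i, Or.inl ⟨rfl, rfl⟩⟩
      · exact Or.inl ⟨i, Or.inr (Or.inl ⟨rfl, rfl⟩)⟩
      · exact Or.inl ⟨i, Or.inr (Or.inr (Or.inl ⟨rfl, rfl⟩))⟩
      · exact Or.inl ⟨i, Or.inr (Or.inr (Or.inr ⟨rfl, rfl⟩))⟩
      · exact Or.inr (Or.inl ⟨(i, 1), rfl, rfl⟩)
      · exact Or.inr (Or.inr ⟨(i, 1), rfl, rfl⟩)

lemma inc_hub :
    (FB (2*m+1)).incidenceSet hub =
      ↑(Finset.image (fun p : Fin (2*m+1) × Fin 3 => s(ul p.1 p.2, hub)) Finset.univ) := by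
  ext e
  induction e using Sym2.ind with
  | _ a b =>
    simp only [SimpleGraph.incidenceSet, Set.mem_setOf_eq, SimpleGraph.mem_edgeSet,
      Sym2.mem_iff, Finset.coe_image, Finset.coe_univ, Set.image_univ, Set.mem_range,
      Sym2.eq_iff]
    constructor
    · rintro ⟨hadj, hmem⟩
      rw [FB_adj] at hadj
      rcases hadj with ⟨i', h⟩ | ⟨p, h1, h2⟩ | ⟨p, h1, h2⟩ <;>
        simp_all [ul, hub, Prod.ext_iff] <;> aesop
    · rintro ⟨p, (⟨rfl, rfl⟩ | ⟨rfl, rfl⟩)⟩ <;>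
        refine ⟨(FB_adj _ _).2 ?_, by simp [ul, hub]⟩
      · exact Or.inr (Or.inl ⟨p, rfl, rfl⟩)
      · exact Or.inr (Or.inr ⟨p, rfl, rfl⟩)


lemma fplus_u (i : Fin (2*m+1)) : fplus (FB (2*m+1)) (flab m) (ul i 0) = 10*m + 6 := by
  rw [fplus, inc_u, finsum_mem_pair (by simp [Sym2.eq_iff, ul, hub]), flab_uw, flab_xu]
  have := i.isLt; omega

lemma fplus_v (i : Fin (2*m+1)) : fplus (FB (2*m+1)) (flab m) (ul i 2) = 10*m + 6 := by
  rw [fplus, inc_v, finsum_mem_pair (by simp [Sym2.eq_iff, ul, hub]), flab_wv, flab_xv]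
  have := rho_lt m i; omega

lemma fplus_w (i : Fin (2*m+1)) : fplus (FB (2*m+1)) (flab m) (ul i 1) = 13*m + 8 := by
  rw [fplus, inc_w]
  have h1 : ({s(ul i 0, ul i 1), s(ul i 1, ul i 2), s(ul i 1, hub)} :
      Set (Sym2 (Vt (2*m+1)))) =
      ↑({s(ul i 0, ul i 1), s(ul i 1, ul i 2), s(ul i 1, hub)} : Finset (Sym2 (Vt (2*m+1)))) := by
    simp
  rw [h1, finsum_mem_coe_finset]
  rw [Finset.sum_insert (by simp [Sym2.eq_iff, ul, hub]),
    Finset.sum_insert (by simp [Sym2.eq_iff, ul, hub]), Finset.sum_singleton,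
    flab_uw, flab_wv, flab_xw]
  have := rho_lt m i; have := i.isLt
  have := sigma_mem m i i.isLt
  omega

lemma fplus_hub : fplus (FB (2*m+1)) (flab m) hub = 34*(m*m) + 37*m + 10 := by
  rw [fplus, inc_hub, finsum_mem_coe_finset]
  rw [Finset.sum_image (by
    rintro ⟨p1, p2⟩ - ⟨q1, q2⟩ - h
    simpa [Sym2.eq_iff, ul, hub, Prod.ext_iff] using h)]
  rw [Fintype.sum_prod_type]
  have hrow : ∀ i : Fin (2*m+1), ∑ j : Fin 3, flab m s(ul i j, hub) =
      (5*(2*m+1) - (i : ℕ)) + (7*m + 3 - ((i : ℕ) + rho m i)) + (2*(2*m+1) - rho m i) := by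
    intro i
    rw [Fin.sum_univ_three, flab_xu, flab_xw, flab_xv]
  simp only [hrow]
  -- pointwise: g i + (2*i + 2*rho m i) = 21*m + 10
  have key : ∀ i : Fin (2*m+1),
      ((5*(2*m+1) - (i : ℕ)) + (7*m + 3 - ((i : ℕ) + rho m i)) + (2*(2*m+1) - rho m i))
        + (2*(i : ℕ) + 2*rho m (i : ℕ)) = 21*m + 10 := by
    intro i
    have := rho_lt m i; have := i.isLt; omega
  have hsum := Finset.sum_congr rfl (fun i (_ : i ∈ Finset.univ) => key i)
  rw [Finset.sum_add_distrib] at hsum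
  have hconst : ∑ _i : Fin (2*m+1), (21*m + 10) = (2*m+1) * (21*m + 10) := by
    simp [Finset.sum_const, Finset.card_univ, mul_comm]
  rw [hconst] at hsum
  -- sum of i
  have hgauss : (2*m+1) * (2*m+1-1) = 4*(m*m) + 2*m := by
    rw [Nat.add_sub_cancel]; ring
  have hid : ∑ i : Fin (2*m+1), (i : ℕ) = 2*(m*m) + m := by
    rw [Fin.sum_univ_eq_sum_range (fun i => i)]
    have := Finset.sum_range_id_mul_two (2*m+1)
    omega
  -- sum of rho
  have hrho : ∑ i : Fin (2*m+1), rho m (i : ℕ) = 2*(m*m) + m := by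
    rw [Fin.sum_univ_eq_sum_range (fun i => rho m i)]
    rw [show ∑ i ∈ Finset.range (2*m+1), rho m i = ∑ i ∈ Finset.range (2*m+1), i from ?_]
    · have := Finset.sum_range_id_mul_two (2*m+1)
      omega
    · apply Finset.sum_nbij' (i := fun k => rho m k) (j := fun k => (k + m + 1) % (2*m+1))
      · intro a ha; exact Finset.mem_range.2 (rho_lt m a)
      · intro a ha; exact Finset.mem_range.2 (Nat.mod_lt _ (by omega))
      · intro a ha
        -- (rho m a + m + 1) % (2m+1) = a
        have ha' := Finset.mem_range.1 ha
        rw [rho, show (a + m) % (2*m+1) + m + 1 = (a + m) % (2*m+1) + (m + 1) from by ring,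
          Nat.mod_add_mod, show a + m + (m + 1) = a + (2*m+1) from by ring,
          Nat.add_mod_right, Nat.mod_eq_of_lt ha']
      · intro a ha
        have ha' := Finset.mem_range.1 ha
        rw [rho, Nat.mod_add_mod, show a + m + 1 + m = a + (2*m+1) from by ring,
          Nat.add_mod_right, Nat.mod_eq_of_lt ha']
      · intro a ha; rfl
  have h2 : ∑ i : Fin (2*m+1), (2*(i : ℕ) + 2*rho m (i : ℕ)) = 8*(m*m) + 4*m := by
    rw [Finset.sum_add_distrib, ← Finset.mul_sum, ← Finset.mul_sum, hid, hrho]; ring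
  rw [h2] at hsum
  have hexp : (2*m+1) * (21*m + 10) = 42*(m*m) + 41*m + 10 := by ring
  omega


lemma adj_uw (i : Fin (2*m+1)) : (FB (2*m+1)).Adj (ul i 0) (ul i 1) :=
  (FB_adj _ _).2 (Or.inl ⟨i, Or.inl ⟨rfl, rfl⟩⟩)

lemma adj_wv (i : Fin (2*m+1)) : (FB (2*m+1)).Adj (ul i 1) (ul i 2) :=
  (FB_adj _ _).2 (Or.inl ⟨i, Or.inr (Or.inr (Or.inl ⟨rfl, rfl⟩))⟩)

lemma adj_hub (i : Fin (2*m+1)) (j : Fin 3) : (FB (2*m+1)).Adj (ul i j) hub :=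
  (FB_adj _ _).2 (Or.inr (Or.inl ⟨(i, j), rfl, rfl⟩))

lemma edge_cases {e : Sym2 (Vt (2*m+1))} (he : e ∈ (FB (2*m+1)).edgeSet) :
    (∃ i, e = s(ul i 0, ul i 1)) ∨ (∃ i, e = s(ul i 1, ul i 2)) ∨
    (∃ i, e = s(ul i 0, hub)) ∨ (∃ i, e = s(ul i 1, hub)) ∨ (∃ i, e = s(ul i 2, hub)) := by
  induction e using Sym2.ind with
  | _ a b =>
    rw [SimpleGraph.mem_edgeSet, FB_adj] at he
    rcases he with ⟨i, ⟨rfl, rfl⟩ | ⟨rfl, rfl⟩ | ⟨rfl, rfl⟩ | ⟨rfl, rfl⟩⟩ |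
      ⟨⟨i, j⟩, rfl, rfl⟩ | ⟨⟨i, j⟩, rfl, rfl⟩
    · exact Or.inl ⟨i, rfl⟩
    · exact Or.inl ⟨i, Sym2.eq_swap⟩
    · exact Or.inr (Or.inl ⟨i, rfl⟩)
    · exact Or.inr (Or.inl ⟨i, Sym2.eq_swap⟩)
    · fin_cases j
      · exact Or.inr (Or.inr (Or.inl ⟨i, rfl⟩))
      · exact Or.inr (Or.inr (Or.inr (Or.inl ⟨i, rfl⟩)))
      · exact Or.inr (Or.inr (Or.inr (Or.inr ⟨i, rfl⟩)))
    · fin_cases j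
      · exact Or.inr (Or.inr (Or.inl ⟨i, Sym2.eq_swap⟩))
      · exact Or.inr (Or.inr (Or.inr (Or.inl ⟨i, Sym2.eq_swap⟩)))
      · exact Or.inr (Or.inr (Or.inr (Or.inr ⟨i, Sym2.eq_swap⟩)))

lemma flab_bijOn :
    Set.BijOn (flab m) ((FB (2*m+1)).edgeSet) (Set.Icc 1 (10*m+5)) := by
  refine ⟨?_, ?_, ?_⟩
  · -- MapsTo
    intro e he
    rcases edge_cases he with ⟨i, rfl⟩ | ⟨i, rfl⟩ | ⟨i, rfl⟩ | ⟨i, rfl⟩ | ⟨i, rfl⟩ <;>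
      simp only [flab_uw, flab_wv, flab_xu, flab_xw, flab_xv] <;>
      exact Set.mem_Icc.2 (by
        have := i.isLt; have := rho_lt m (i : ℕ); have := sigma_mem m (i : ℕ) i.isLt; omega)
  · -- InjOn
    intro e he e' he' heq
    rcases edge_cases he with ⟨i, rfl⟩ | ⟨i, rfl⟩ | ⟨i, rfl⟩ | ⟨i, rfl⟩ | ⟨i, rfl⟩ <;>
      rcases edge_cases he' with ⟨i', rfl⟩ | ⟨i', rfl⟩ | ⟨i', rfl⟩ | ⟨i', rfl⟩ | ⟨i', rfl⟩ <;>
      simp only [flab_uw, flab_wv, flab_xu, flab_xw, flab_xv] at heq <;>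
      · have h1 := i.isLt; have h1' := i'.isLt
        have h2 := rho_lt m (i : ℕ); have h2' := rho_lt m (i' : ℕ)
        have h3 := sigma_mem m (i : ℕ) i.isLt; have h3' := sigma_mem m (i' : ℕ) i'.isLt
        first
        | exact absurd heq (by omega)
        | rw [show i = i' from Fin.val_injective (by omega)]
        | rw [show i = i' from Fin.val_injective (rho_injOn m i.isLt i'.isLt (by omega))]
        | rw [show i = i' from Fin.val_injective (sigma_injOn m i.isLt i'.isLt (by omega))]
  · -- SurjOn
    intro k hk
    rw [Set.mem_Icc] at hk
    obtain ⟨hk1, hk2⟩ := hk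
    by_cases c1 : k ≤ 2*m+1
    · refine ⟨s(ul ⟨k-1, by omega⟩ 0, ul ⟨k-1, by omega⟩ 1), (adj_uw _), ?_⟩
      rw [flab_uw]; simp; omega
    by_cases c2 : k ≤ 4*m+2
    · obtain ⟨i, hi, hri⟩ := rho_surj m (4*m+2-k) (by omega)
      refine ⟨s(ul ⟨i, hi⟩ 2, hub), (adj_hub _ _), ?_⟩
      rw [flab_xv]; simp only [Fin.val_mk]; rw [hri]; omega
    by_cases c3 : k ≤ 6*m+3
    · obtain ⟨i, hi, hsi⟩ := sigma_surj m (7*m+3-k) (by omega) (by omega)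
      refine ⟨s(ul ⟨i, hi⟩ 1, hub), (adj_hub _ _), ?_⟩
      rw [flab_xw]; simp only [Fin.val_mk]; rw [hsi]; omega
    by_cases c4 : k ≤ 8*m+4
    · obtain ⟨i, hi, hri⟩ := rho_surj m (k-(6*m+4)) (by omega)
      refine ⟨s(ul ⟨i, hi⟩ 1, ul ⟨i, hi⟩ 2), (adj_wv _), ?_⟩
      rw [flab_wv]; simp only [Fin.val_mk]; rw [hri]; omega
    · refine ⟨s(ul ⟨10*m+5-k, by omega⟩ 0, hub), (adj_hub _ _), ?_⟩
      rw [flab_xu]; simp only [Fin.val_mk]; omega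


lemma ncard_edge : ((FB (2*m+1)).edgeSet).ncard = 10*m+5 := by
  have h := flab_bijOn (m := m)
  have h1 : (flab m '' (FB (2*m+1)).edgeSet).ncard = ((FB (2*m+1)).edgeSet).ncard :=
    Set.ncard_image_of_injOn h.injOn
  rw [h.image_eq] at h1
  rw [← h1, ← Finset.coe_Icc, Set.ncard_coe_finset, Nat.card_Icc]; omega

lemma fplus_inl (i : Fin (2*m+1)) (j : Fin 3) :
    fplus (FB (2*m+1)) (flab m) (Sum.inl (i, j)) = if j = 1 then 13*m+8 else 10*m+6 := by
  fin_cases j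
  · simpa [ul] using fplus_u i
  · simpa [ul] using fplus_w i
  · simpa [ul] using fplus_v i

lemma fplus_cases (v : Vt (2*m+1)) :
    fplus (FB (2*m+1)) (flab m) v = 10*m+6 ∨ fplus (FB (2*m+1)) (flab m) v = 13*m+8 ∨
    fplus (FB (2*m+1)) (flab m) v = 34*(m*m)+37*m+10 := by
  rcases v with ⟨i, j⟩ | x
  · rw [fplus_inl]; split_ifs <;> simp
  · have hx : x = 0 := Subsingleton.elim _ _
    subst hx
    exact Or.inr (Or.inr fplus_hub)

lemma range_fplus :
    Set.range (fplus (FB (2*m+1)) (flab m)) =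
      {10*m+6, 13*m+8, 34*(m*m)+37*m+10} := by
  apply Set.eq_of_subset_of_subset
  · rintro k ⟨v, rfl⟩
    rcases fplus_cases v with h | h | h <;> simp [h]
  · rintro k (rfl | rfl | rfl)
    · exact ⟨ul ⟨0, by omega⟩ 0, fplus_u _⟩
    · exact ⟨ul ⟨0, by omega⟩ 1, fplus_w _⟩
    · exact ⟨hub, fplus_hub⟩


lemma flab_isLocalAntimagic : IsLocalAntimagic (FB (2*m+1)) (flab m) := by
  constructor
  · rw [ncard_edge]; exact flab_bijOn
  · intro u w hadj
    rw [FB_adj] at hadj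
    rcases hadj with ⟨i, ⟨rfl, rfl⟩ | ⟨rfl, rfl⟩ | ⟨rfl, rfl⟩ | ⟨rfl, rfl⟩⟩ |
        ⟨⟨i, j⟩, rfl, rfl⟩ | ⟨⟨i, j⟩, rfl, rfl⟩
    · rw [fplus_u, fplus_w]; omega
    · rw [fplus_w, fplus_u]; omega
    · rw [fplus_w, fplus_v]; omega
    · rw [fplus_v, fplus_w]; omega
    · rw [fplus_inl, fplus_hub]; split_ifs <;> omega
    · rw [fplus_inl, fplus_hub]; split_ifs <;> omega

lemma lower_bound {f : Sym2 (Vt (2*m+1)) → ℕ}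
    (hf : IsLocalAntimagic (FB (2*m+1)) f) :
    3 ≤ (Set.range (fplus (FB (2*m+1)) f)).ncard := by
  set i0 : Fin (2*m+1) := ⟨0, by omega⟩ with hi0
  set a := fplus (FB (2*m+1)) f (ul i0 0) with ha
  set b := fplus (FB (2*m+1)) f (ul i0 1) with hb
  set c := fplus (FB (2*m+1)) f hub with hc
  have h1 : a ≠ b := hf.2 (adj_uw i0)
  have h2 : a ≠ c := hf.2 (adj_hub i0 0)
  have h3 : b ≠ c := hf.2 (adj_hub i0 1)
  have hsub : ({a, b, c} : Set ℕ) ⊆ Set.range (fplus (FB (2*m+1)) f) := by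
    rintro k (rfl | rfl | rfl)
    · exact ⟨_, rfl⟩
    · exact ⟨_, rfl⟩
    · exact ⟨_, rfl⟩
  calc (3 : ℕ) = ({a, b, c} : Set ℕ).ncard :=
        (Set.ncard_eq_three.2 ⟨a, b, c, h1, h2, h3, rfl⟩).symm
    _ ≤ _ := Set.ncard_le_ncard hsub (Set.finite_range _)

theorem chiLA_FB (n : ℕ) (hodd : Odd n) (hn : 1 ≤ n) : chiLA (FB n) = 3 := by
  obtain ⟨m, rfl⟩ : ∃ m, n = 2*m+1 := by
    obtain ⟨k, hk⟩ := hodd; exact ⟨k, by omega⟩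
  have hmem : 3 ∈ {c : ℕ | ∃ f : Sym2 (Vt (2*m+1)) → ℕ,
      IsLocalAntimagic (FB (2*m+1)) f ∧ (Set.range (fplus (FB (2*m+1)) f)).ncard = c} := by
    refine ⟨flab m, flab_isLocalAntimagic, ?_⟩
    rw [range_fplus]
    exact Set.ncard_eq_three.2 ⟨_, _, _, by omega, by omega, by omega, rfl⟩
  refine le_antisymm (Nat.sInf_le hmem) (le_csInf ⟨3, hmem⟩ ?_)
  rintro c ⟨f, hf, rfl⟩
  exact lower_bound hf

end LocalAntimagic
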